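/- Let R and Y be independent real random variables with R ≥ 0 almost surely and 0 < Y ≤ M almost surely for some constant M > 0. Let α > 0 and c > 0 and suppose lim_{x→∞} x^α P(R > x) = c. Then lim_{x→∞} x^α P(R·Y > x) = c · E[Y^α]. -/
import Mathlib


open MeasureTheory Set
open scoped ENNReal

/-- Breiman's lemma with a bounded positive independent factor:
if `x^α P(R > x) → c` then `x^α P(RY > x) → c E[Y^α]`. -/
theorem stmt_4 {Ω : Type*} [MeasurableSpace Ω] (P : Measure Ω) [IsProbabilityMeasure P]
    (R Y : Ω → ℝ) (hRm : Measurable R) (hYm : Measurable Y)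
    (hInd : ProbabilityTheory.IndepFun R Y P)
    (hR0 : ∀ᵐ ω ∂P, 0 ≤ R ω)
    (M : ℝ) (hM : 0 < M) (hY : ∀ᵐ ω ∂P, 0 < Y ω ∧ Y ω ≤ M)
    (α c : ℝ) (hα : 0 < α) (hc : 0 < c)
    (htail : Filter.Tendsto (fun x : ℝ => x ^ α * (P {ω | x < R ω}).toReal)
      Filter.atTop (nhds c)) :
    Filter.Tendsto (fun x : ℝ => x ^ α * (P {ω | x < R ω * Y ω}).toReal)
      Filter.atTop (nhds (c * ∫ ω, Y ω ^ α ∂P)) := by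
  classical
  set μ : Measure ℝ := P.map R with hμdef
  set ν : Measure ℝ := P.map Y with hνdef
  haveI : IsProbabilityMeasure μ := Measure.isProbabilityMeasure_map hRm.aemeasurable
  haveI : IsProbabilityMeasure ν := Measure.isProbabilityMeasure_map hYm.aemeasurable
  -- a.e. bound on ν
  have hms : MeasurableSet {y : ℝ | 0 < y ∧ y ≤ M} :=
    (measurableSet_lt measurable_const measurable_id).inter
      (measurableSet_le measurable_id measurable_const)
  have hYν : ∀ᵐ y ∂ν, 0 < y ∧ y ≤ M := (ae_map_iff hYm.aemeasurable hms).mpr hY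
  -- tail identity
  have hTmap : ∀ t : ℝ, μ {r | t < r} = P {ω | t < R ω} := by
    intro t
    have hs : MeasurableSet {r : ℝ | t < r} := measurableSet_lt measurable_const measurable_id
    rw [hμdef, Measure.map_apply hRm hs]
    rfl
  -- global bound on t^α * tail
  obtain ⟨a, ha⟩ := Filter.eventually_atTop.mp
    (htail.eventually (eventually_le_nhds (lt_add_one c)))
  set x₁ : ℝ := max a 1 with hx₁def
  have hx₁1 : (1 : ℝ) ≤ x₁ := le_max_right a 1
  have hx₁0 : (0 : ℝ) ≤ x₁ := le_trans zero_le_one hx₁1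
  set K : ℝ := max (x₁ ^ α) (c + 1) with hKdef
  have hK0 : 0 ≤ K := le_trans (Real.rpow_nonneg hx₁0 α) (le_max_left _ _)
  have hbound : ∀ t : ℝ, 0 < t → t ^ α * (P {ω | t < R ω}).toReal ≤ K := by
    intro t ht
    rcases le_or_gt x₁ t with h | h
    · exact le_trans (ha t (le_trans (le_max_left a 1) h)) (le_max_right _ _)
    · refine le_trans ?_ (le_max_left _ _)
      have h1 : (P {ω | t < R ω}).toReal ≤ 1 := by
        have := ENNReal.toReal_mono ENNReal.one_ne_top (prob_le_one (μ := P) (s := {ω | t < R ω}))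
        simpa using this
      calc t ^ α * (P {ω | t < R ω}).toReal ≤ x₁ ^ α * 1 :=
            mul_le_mul (Real.rpow_le_rpow ht.le h.le hα.le) h1 ENNReal.toReal_nonneg
              (Real.rpow_nonneg hx₁0 α)
        _ = x₁ ^ α := mul_one _
  -- independence: the product identity
  have hmap : P.map (fun ω => (R ω, Y ω)) = μ.prod ν :=
    (ProbabilityTheory.indepFun_iff_map_prod_eq_prod_map_map hRm.aemeasurable
      hYm.aemeasurable).mp hInd
  have hsprod : ∀ x : ℝ, MeasurableSet {p : ℝ × ℝ | x < p.1 * p.2} := fun x =>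
    measurableSet_lt measurable_const (measurable_fst.mul measurable_snd)
  have hkey : ∀ x : ℝ, P {ω | x < R ω * Y ω} = ∫⁻ y, μ {r | x < r * y} ∂ν := by
    intro x
    have h1 : P {ω | x < R ω * Y ω}
        = P.map (fun ω => (R ω, Y ω)) {p : ℝ × ℝ | x < p.1 * p.2} := by
      rw [Measure.map_apply (hRm.prodMk hYm) (hsprod x)]
      rfl
    rw [h1, hmap, Measure.prod_apply_symm (hsprod x)]
    rfl
  have hsec : ∀ x : ℝ, Measurable fun y : ℝ => μ {r | x < r * y} := fun x =>
    measurable_measure_prodMk_right (hsprod x)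
  have hint : ∀ x : ℝ, (P {ω | x < R ω * Y ω}).toReal
      = ∫ y, (μ {r | x < r * y}).toReal ∂ν := by
    intro x
    rw [hkey x, ← integral_toReal (hsec x).aemeasurable
      (ae_of_all _ fun y => lt_of_le_of_lt prob_le_one ENNReal.one_lt_top)]
  -- key pointwise identity for y > 0, x > 0
  have hident : ∀ x y : ℝ, 0 < x → 0 < y →
      x ^ α * (μ {r | x < r * y}).toReal
        = y ^ α * ((x / y) ^ α * (P {ω | x / y < R ω}).toReal) := by
    intro x y hx hy
    have hset : {r : ℝ | x < r * y} = {r : ℝ | x / y < r} := by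
      ext r
      simp [div_lt_iff₀ hy]
    have hyα : (0 : ℝ) < y ^ α := Real.rpow_pos_of_pos hy α
    have hxy : y ^ α * (x / y) ^ α = x ^ α := by
      rw [Real.div_rpow hx.le hy.le, mul_div_cancel₀ _ (ne_of_gt hyα)]
    rw [hset, hTmap, ← hxy]
    ring
  -- apply dominated convergence
  have hconv : Filter.Tendsto
      (fun x : ℝ => ∫ y, x ^ α * (μ {r | x < r * y}).toReal ∂ν)
      Filter.atTop (nhds (∫ y, c * y ^ α ∂ν)) := by
    apply tendsto_integral_filter_of_dominated_convergence (fun _ => M ^ α * K)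
    · exact Filter.Eventually.of_forall fun x =>
        (((hsec x).ennreal_toReal.const_mul _).aestronglyMeasurable)
    · filter_upwards [Filter.eventually_ge_atTop (1 : ℝ)] with x hx
      filter_upwards [hYν] with y hy
      have hx0 : (0 : ℝ) < x := lt_of_lt_of_le zero_lt_one hx
      have hxy0 : (0 : ℝ) < x / y := div_pos hx0 hy.1
      have hF0 : 0 ≤ x ^ α * (μ {r | x < r * y}).toReal :=
        mul_nonneg (Real.rpow_nonneg hx0.le α) ENNReal.toReal_nonneg
      rw [Real.norm_of_nonneg hF0, hident x y hx0 hy.1]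
      have h1 : (x / y) ^ α * (P {ω | x / y < R ω}).toReal ≤ K := hbound _ hxy0
      have h2 : y ^ α ≤ M ^ α := Real.rpow_le_rpow hy.1.le hy.2 hα.le
      exact mul_le_mul h2 h1
        (mul_nonneg (Real.rpow_nonneg hxy0.le α) ENNReal.toReal_nonneg)
        (Real.rpow_nonneg hM.le α)
    · exact integrable_const _
    · filter_upwards [hYν] with y hy
      have hdiv : Filter.Tendsto (fun x : ℝ => x / y) Filter.atTop Filter.atTop :=
        Filter.tendsto_id.atTop_div_const hy.1
      have h1 : Filter.Tendsto
          (fun x : ℝ => y ^ α * ((x / y) ^ α * (P {ω | x / y < R ω}).toReal))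
          Filter.atTop (nhds (y ^ α * c)) := (htail.comp hdiv).const_mul _
      have h2 : y ^ α * c = c * y ^ α := mul_comm _ _
      rw [← h2]
      refine h1.congr' ?_
      filter_upwards [Filter.eventually_gt_atTop (0 : ℝ)] with x hx
      exact (hident x y hx hy.1).symm
  -- identify the two sides
  have heq : (fun x : ℝ => x ^ α * (P {ω | x < R ω * Y ω}).toReal)
      = fun x : ℝ => ∫ y, x ^ α * (μ {r | x < r * y}).toReal ∂ν := by
    funext x
    rw [hint x, integral_const_mul]
  have hlim : ∫ y, c * y ^ α ∂ν = c * ∫ ω, Y ω ^ α ∂P := by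
    rw [integral_const_mul]
    congr 1
    rw [hνdef, integral_map hYm.aemeasurable
      ((Real.continuous_rpow_const hα.le).measurable.aestronglyMeasurable)]
  rw [heq, ← hlim]
  exact hconv
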